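/- Let X be a finite topological T₀-space and let φ : ℝ≥0 × X → X be a semiflow. If y ∈ X is a minimal element of X in the specialization order (equivalently, y has height 0, equivalently {y} is closed), then φ(t,y) = y for every t ∈ ℝ≥0. -/

import Mathlib

open NNReal

/-- A semiflow on a topological space `X`: a jointly continuous map
`φ : ℝ≥0 × X → X` with `φ 0 x = x` and `φ s (φ t x) = φ (s + t) x`. -/
def IsSemiflow {X : Type*} [TopologicalSpace X] (φ : ℝ≥0 → X → X) : Prop :=
  Continuous (fun p : ℝ≥0 × X => φ p.1 p.2) ∧
  (∀ x : X, φ 0 x = x) ∧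
  ∀ (s t : ℝ≥0) (x : X), φ s (φ t x) = φ (s + t) x

/-- A semiflow is trivial if every time-`t` map is the identity. -/
def IsTrivialSemiflow {X : Type*} [TopologicalSpace X] (φ : ℝ≥0 → X → X) : Prop :=
  ∀ (t : ℝ≥0) (x : X), φ t x = x

/-- `x` is a down beat point: `U_x \ {x}` has a greatest element in the
specialization order (`y ⤳ x` means `y ≤ x`, i.e. `y ∈ U_x`). -/
def IsDownBeatPoint {X : Type*} [TopologicalSpace X] (x : X) : Prop :=
  ∃ m : X, (m ⤳ x ∧ m ≠ x) ∧ ∀ y : X, y ⤳ x → y ≠ x → y ⤳ m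

/-- `x` is an up beat point: `F_x \ {x}` has a least element in the
specialization order. -/
def IsUpBeatPoint {X : Type*} [TopologicalSpace X] (x : X) : Prop :=
  ∃ m : X, (x ⤳ m ∧ m ≠ x) ∧ ∀ y : X, x ⤳ y → y ≠ x → m ⤳ y

/-- A semiflow on a finite `T₀`-space fixes every point that is minimal in the
specialization order (i.e. of height `0`). -/
theorem semiflow_fixes_minimal {X : Type*} [TopologicalSpace X] [Finite X] [T0Space X]
    (φ : ℝ≥0 → X → X) (hφ : IsSemiflow φ) (y : X) (hy : ∀ z : X, z ⤳ y → z = y) :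
    ∀ t : ℝ≥0, φ t y = y := by
  obtain ⟨hcont, h0, hadd⟩ := hφ
  have hopen : IsOpen ({y} : Set X) := by
    have heq : ({y} : Set X) = ⋂₀ {U : Set X | IsOpen U ∧ y ∈ U} := by
      apply Set.eq_of_subset_of_subset
      · intro z hz
        rcases hz with rfl
        intro U hU; exact hU.2
      · intro z hz
        have hspec : z ⤳ y := by
          rw [specializes_iff_forall_open]
          intro s hs hys
          exact hz s ⟨hs, hys⟩
        simp [hy z hspec]
    rw [heq]
    exact Set.Finite.isOpen_sInter (Set.toFinite _) (fun s hs => hs.1)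
  have hc : Continuous (fun t : ℝ≥0 => φ t y) :=
    hcont.comp (continuous_id.prodMk continuous_const)
  by_contra h
  push_neg at h
  set B : Set ℝ≥0 := {t | φ t y ≠ y} with hB
  have hBne : B.Nonempty := h
  have hBclosed : IsClosed B := by
    have : B = (fun t : ℝ≥0 => φ t y) ⁻¹' ({y}ᶜ) := rfl
    rw [this]
    exact hopen.isClosed_compl.preimage hc
  have ht₀ : sInf B ∈ B := hBclosed.csInf_mem hBne (OrderBot.bddBelow B)
  set t₀ := sInf B with ht₀def
  have ht0pos : 0 < t₀ := by
    rcases (zero_le (a := t₀)).lt_or_eq with h' | h'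
    · exact h'
    · exact absurd (h0 y) (h' ▸ ht₀)
  have hhalf : φ (t₀ / 2) y = y := by
    by_contra hmem
    have h1 : t₀ ≤ t₀ / 2 := csInf_le (OrderBot.bddBelow B) hmem
    have h2 : t₀ / 2 < t₀ := half_lt_self ht0pos.ne'
    exact absurd h1 (not_le.mpr h2)
  apply ht₀
  calc φ t₀ y = φ (t₀ / 2 + t₀ / 2) y := by rw [add_halves]
    _ = φ (t₀ / 2) (φ (t₀ / 2) y) := (hadd _ _ _).symm
    _ = y := by rw [hhalf, hhalf]
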